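/- The cyclic group C_m acts on Λ(m,p) by (generator s)·λ = (λ(i+1) − λ(2))_{i∈ℤ} (shift and renormalize). For λ ∈ Λ^(α)(m,p), the stabilizer of λ under this action is the unique subgroup of C_m of order α; in particular, the orbit of λ has exactly m/α elements, and consequently m/α divides |Λ^(α)(m,p)|. -/

import Mathlib

/-- The set `Λ(m,p)`. -/
def Lambda (m p : ℕ) : Set (ℤ → ℤ) :=
  {l | l 1 = 0 ∧ (∀ i : ℤ, l i ≤ l (i + 1)) ∧ ∀ i : ℤ, l (i + (m : ℤ)) = l i + (p : ℤ)}

/-- `Λ^(α)(m,p)`. -/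
def LambdaExact (m p α : ℕ) : Set (ℤ → ℤ) :=
  {l | l ∈ Lambda (m / α) (p / α) ∧
    ∀ α' : ℕ, α' ∣ m → α' ∣ p → α ∣ α' → α < α' → l ∉ Lambda (m / α') (p / α')}

/-- The shift-and-renormalize map: `(k · λ)(i) = λ(i+k) − λ(k+1)`. -/
def lambdaShift (k : ℤ) (l : ℤ → ℤ) : ℤ → ℤ := fun i => l (i + k) - l (k + 1)

lemma lShift_mem (m p : ℕ) (k : ℤ) (l : ℤ → ℤ) (h : l ∈ Lambda m p) :
    lambdaShift k l ∈ Lambda m p := by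
  obtain ⟨h1, h2, h3⟩ := h
  refine ⟨by simp [lambdaShift, add_comm], fun i => ?_, fun i => ?_⟩
  · simp only [lambdaShift]
    have := h2 (i + k)
    have e : i + 1 + k = i + k + 1 := by ring
    rw [e]; omega
  · simp only [lambdaShift]
    have := h3 (i + k)
    have e : i + (m : ℤ) + k = i + k + (m : ℤ) := by ring
    rw [e]; omega

lemma lShift_add (a b : ℤ) (l : ℤ → ℤ) :
    lambdaShift a (lambdaShift b l) = lambdaShift (a + b) l := by
  funext i
  simp only [lambdaShift]
  have e1 : i + a + b = i + (a + b) := by ring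
  have e2 : a + 1 + b = a + b + 1 := by ring
  rw [e1, e2]; ring

lemma lShift_zero (l : ℤ → ℤ) (h : l 1 = 0) : lambdaShift 0 l = l := by
  funext i; simp [lambdaShift, h]

lemma lIter (a b : ℤ) (l : ℤ → ℤ) (h : ∀ i, l (i + a) = l i + b) :
    ∀ t : ℤ, ∀ i, l (i + a * t) = l i + b * t := by
  intro t
  induction t using Int.induction_on with
  | zero => simp
  | succ n ih =>
    intro i
    have e : i + a * ((n : ℤ) + 1) = (i + a * n) + a := by ring
    rw [e, h, ih]; ring
  | pred n ih =>
    intro i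
    have e : i + a * (-(n : ℤ) - 1) = (i + a * (-n - 1) + a) - a := by ring
    have h' : ∀ j : ℤ, l (j - a) = l j - b := by
      intro j; have := h (j - a); rw [sub_add_cancel] at this; omega
    have e2 : i + a * (-(n : ℤ) - 1) + a = i + a * (-n) := by ring
    rw [show i + a * (-(n : ℤ) - 1) = (i + a * (-n)) - a by ring, h', ih]; ring

lemma stab_dvd (m p α : ℕ) (hm : 0 < m) (hp : 0 < p) (hαm : α ∣ m) (hαp : α ∣ p)
    (l : ℤ → ℤ) (hl : l ∈ LambdaExact m p α) (k : ℤ)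
    (h : ∀ i, l (i + k) = l i + l (k + 1)) : ((m / α : ℕ) : ℤ) ∣ k := by
  have hα : 0 < α := by
    rcases Nat.eq_zero_or_pos α with h0 | h0
    · subst h0; simp at hαm; omega
    · exact h0
  set d : ℕ := m / α with hd_def
  set q : ℕ := p / α with hq_def
  have hd : 0 < d := Nat.div_pos (Nat.le_of_dvd hm hαm) hα
  have hdm : d ∣ m := Nat.div_dvd_of_dvd hαm
  have hdα : d * α = m := Nat.div_mul_cancel hαm
  have hqα : q * α = p := Nat.div_mul_cancel hαp
  obtain ⟨h1, h2, h3⟩ := hl.1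
  set g : ℕ := Int.gcd (d : ℤ) k with hg_def
  have hgd : (g : ℤ) ∣ (d : ℤ) := Int.gcd_dvd_left _ _
  have hgk : (g : ℤ) ∣ k := Int.gcd_dvd_right _ _
  have hgd' : g ∣ d := by exact_mod_cast hgd
  have hg0 : 0 < g := Int.gcd_pos_iff.mpr (Or.inl (by exact_mod_cast hd.ne'))
  set x := Int.gcdA (d : ℤ) k with hx_def
  set y := Int.gcdB (d : ℤ) k with hy_def
  have hbez : (g : ℤ) = (d : ℤ) * x + k * y := Int.gcd_eq_gcd_ab (d : ℤ) k
  set r : ℤ := (q : ℤ) * x + l (k + 1) * y with hr_def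
  have hg : ∀ i, l (i + (g : ℤ)) = l i + r := by
    intro i
    have A := lIter (d : ℤ) (q : ℤ) l h3 x (i := i)
    have B := lIter k (l (k + 1)) l h y (i := i + (d : ℤ) * x)
    rw [show i + (g : ℤ) = (i + (d : ℤ) * x) + k * y by rw [hbez]; ring, B, A, hr_def]
    ring
  set α' : ℕ := m / g with hα'_def
  have hgm : g ∣ m := hgd'.trans hdm
  have hα'0 : 0 < α' := Nat.div_pos (Nat.le_of_dvd hm hgm) hg0
  have hgα' : g * α' = m := Nat.mul_div_cancel' hgm
  have hmg : m / α' = g := Nat.div_div_self hgm hm.ne'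
  have hP : ∀ i, l (i + (m : ℤ)) = l i + (p : ℤ) := by
    intro i
    have := lIter (d : ℤ) (q : ℤ) l h3 (α : ℤ) i
    rw [show (d : ℤ) * (α : ℤ) = (m : ℤ) by exact_mod_cast congrArg (Nat.cast : ℕ → ℤ) hdα,
      show (q : ℤ) * (α : ℤ) = (p : ℤ) by exact_mod_cast congrArg (Nat.cast : ℕ → ℤ) hqα] at this
    exact this
  have hP2 : ∀ i, l (i + (m : ℤ)) = l i + r * (α' : ℤ) := by
    intro i
    have := lIter (g : ℤ) r l hg (α' : ℤ) i
    rw [show (g : ℤ) * (α' : ℤ) = (m : ℤ) by exact_mod_cast congrArg (Nat.cast : ℕ → ℤ) hgα'] at this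
    exact this
  have hr : r * (α' : ℤ) = (p : ℤ) := by
    have e1 := hP 0
    have e2 := hP2 0
    omega
  have hrpos : 0 < r := by
    by_contra hc
    push_neg at hc
    have : r * (α' : ℤ) ≤ 0 :=
      mul_nonpos_of_nonpos_of_nonneg hc (by exact_mod_cast Nat.zero_le α')
    omega
  have hα'p : α' ∣ p := by
    have : (α' : ℤ) ∣ (p : ℤ) := ⟨r, by rw [← hr]; ring⟩
    exact_mod_cast this
  have hpα' : ((p / α' : ℕ) : ℤ) = r := by
    have e : (α' : ℤ) * ((p / α' : ℕ) : ℤ) = (α' : ℤ) * r := by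
      rw [show (α' : ℤ) * ((p / α' : ℕ) : ℤ) = ((α' * (p / α') : ℕ) : ℤ) by push_cast; ring,
        Nat.mul_div_cancel' hα'p, ← hr]
      ring
    exact mul_left_cancel₀ (by exact_mod_cast hα'0.ne') e
  have hmem : l ∈ Lambda (m / α') (p / α') := by
    refine ⟨h1, h2, fun i => ?_⟩
    rw [hmg, hpα']
    exact hg i
  have hαα' : α ∣ α' := by
    obtain ⟨e, he⟩ := hgd'
    have hme : m = g * (e * α) := by rw [← hdα, he]; ring
    have : α' = e * α := by rw [hα'_def, hme, Nat.mul_div_cancel_left _ hg0]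
    exact ⟨e, by rw [this, mul_comm]⟩
  have hnot : ¬ (α < α') := fun hlt => hl.2 α' (Nat.div_dvd_of_dvd hgm) hα'p hαα' hlt hmem
  have : α' = α := le_antisymm (by omega) (Nat.le_of_dvd hα'0 hαα')
  have hgd2 : g = d := by rw [← hmg, this]
  rw [← hgd2]
  exact hgk

lemma lShift_congr (d q : ℕ) (l : ℤ → ℤ) (hper : ∀ i, l (i + (d : ℤ)) = l i + (q : ℤ))
    (k k' : ℤ) (h : (d : ℤ) ∣ k - k') : lambdaShift k l = lambdaShift k' l := by
  obtain ⟨t, ht⟩ := h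
  have hk : k = k' + (d : ℤ) * t := by omega
  funext i
  simp only [lambdaShift]
  have A := lIter (d : ℤ) (q : ℤ) l hper t (i := i + k')
  have B := lIter (d : ℤ) (q : ℤ) l hper t (i := k' + 1)
  rw [show i + k = (i + k') + (d : ℤ) * t by rw [hk]; ring,
    show k + 1 = (k' + 1) + (d : ℤ) * t by rw [hk]; ring, A, B]
  ring

lemma lShift_eq_pointwise (l : ℤ → ℤ) (h1 : l 1 = 0) (k k' : ℤ)
    (h : lambdaShift k l = lambdaShift k' l) :
    ∀ i, l (i + (k - k')) = l i + l ((k - k') + 1) := by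
  have hpt : ∀ i, l (i + k) - l (k + 1) = l (i + k') - l (k' + 1) := fun i => congrFun h i
  have step : ∀ i, l (i + (k - k')) = l i + (l (k + 1) - l (k' + 1)) := by
    intro i
    have := hpt (i - k')
    rw [show i - k' + k = i + (k - k') by ring, show i - k' + k' = i by ring] at this
    omega
  have hc : l (k + 1) - l (k' + 1) = l ((k - k') + 1) := by
    have := step 1
    rw [show (1 : ℤ) + (k - k') = (k - k') + 1 by ring, h1] at this
    omega
  intro i
  rw [step i, hc]

lemma stab_iff (m p α : ℕ) (hm : 0 < m) (hp : 0 < p) (hαm : α ∣ m) (hαp : α ∣ p)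
    (l : ℤ → ℤ) (hl : l ∈ LambdaExact m p α) (k : ℤ) :
    lambdaShift k l = l ↔ ((m / α : ℕ) : ℤ) ∣ k := by
  constructor
  · intro h
    have h0 : lambdaShift k l = lambdaShift 0 l := by rw [lShift_zero l hl.1.1]; exact h
    have := lShift_eq_pointwise l hl.1.1 k 0 h0
    simp only [sub_zero] at this
    exact stab_dvd m p α hm hp hαm hαp l hl k this
  · intro h
    have := lShift_congr (m / α) (p / α) l hl.1.2.2 k 0 (by simpa using h)
    rw [this, lShift_zero l hl.1.1]

lemma orbit_card (m p α : ℕ) (hm : 0 < m) (hp : 0 < p) (hαm : α ∣ m) (hαp : α ∣ p)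
    (l : ℤ → ℤ) (hl : l ∈ LambdaExact m p α) :
    Nat.card {l' : ℤ → ℤ | ∃ k : ℤ, lambdaShift k l = l'} = m / α := by
  have hα : 0 < α := by
    rcases Nat.eq_zero_or_pos α with h0 | h0
    · subst h0; simp at hαm; omega
    · exact h0
  set d : ℕ := m / α with hd_def
  have hd : 0 < d := Nat.div_pos (Nat.le_of_dvd hm hαm) hα
  set f : Fin d → (ℤ → ℤ) := fun j => lambdaShift ((j : ℕ) : ℤ) l with hf_def
  have hinj : Function.Injective f := by
    intro j j' hjj
    have hpt := lShift_eq_pointwise l hl.1.1 ((j : ℕ) : ℤ) ((j' : ℕ) : ℤ) hjj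
    have hdvd := stab_dvd m p α hm hp hαm hαp l hl _ hpt
    have habs : |((j : ℕ) : ℤ) - ((j' : ℕ) : ℤ)| < (d : ℤ) := by
      have := j.is_lt; have := j'.is_lt
      rw [abs_lt]; omega
    have := Int.eq_zero_of_abs_lt_dvd hdvd habs
    have : (j : ℕ) = (j' : ℕ) := by omega
    exact Fin.ext this
  have hrange : {l' : ℤ → ℤ | ∃ k : ℤ, lambdaShift k l = l'} = Set.range f := by
    ext l'
    constructor
    · rintro ⟨k, rfl⟩
      have hmod0 : (0 : ℤ) ≤ k % (d : ℤ) := Int.emod_nonneg k (by exact_mod_cast hd.ne')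
      have hmodlt : k % (d : ℤ) < (d : ℤ) := Int.emod_lt_of_pos k (by exact_mod_cast hd)
      refine ⟨⟨(k % (d : ℤ)).toNat, by omega⟩, ?_⟩
      show lambdaShift _ l = lambdaShift k l
      have hcast : (((k % (d : ℤ)).toNat : ℕ) : ℤ) = k % (d : ℤ) := Int.toNat_of_nonneg hmod0
      refine lShift_congr d (p / α) l hl.1.2.2 _ k ?_
      refine ⟨-(k / (d : ℤ)), ?_⟩
      rw [hcast, Int.emod_def]; ring
    · rintro ⟨j, rfl⟩
      exact ⟨_, rfl⟩
  rw [hrange, Nat.card_range_of_injective hinj, Nat.card_eq_fintype_card, Fintype.card_fin]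

lemma shift_mem_exact (m p α : ℕ) (k : ℤ) (l : ℤ → ℤ) (hl : l ∈ LambdaExact m p α) :
    lambdaShift k l ∈ LambdaExact m p α := by
  refine ⟨lShift_mem _ _ k l hl.1, fun α' h1 h2 h3 h4 hmem => hl.2 α' h1 h2 h3 h4 ?_⟩
  have := lShift_mem _ _ (-k) _ hmem
  rwa [lShift_add, show -k + k = 0 by ring, lShift_zero l hl.1.1] at this

lemma card_dvd' (m p α : ℕ) (hm : 0 < m) (hp : 0 < p) (hαm : α ∣ m) (hαp : α ∣ p) :
    (m / α) ∣ Nat.card (LambdaExact m p α) := by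
  by_cases hfin : (LambdaExact m p α).Finite
  · classical
    haveI := hfin.fintype
    set S := LambdaExact m p α with hS_def
    have hzero : ∀ x : ↥S, x.1 1 = 0 := fun x => x.2.1.1
    set sd : Setoid ↥S :=
      ⟨fun x y => ∃ k : ℤ, lambdaShift k x.1 = y.1,
        ⟨fun x => ⟨0, lShift_zero x.1 (hzero x)⟩,
         fun {x y} h => by
          obtain ⟨k, hk⟩ := h
          exact ⟨-k, by rw [← hk, lShift_add, show -k + k = 0 by ring, lShift_zero x.1 (hzero x)]⟩,
         fun {x y z} h h' => by
          obtain ⟨k, hk⟩ := h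
          obtain ⟨k', hk'⟩ := h'
          exact ⟨k' + k, by rw [← hk', ← hk, lShift_add]⟩⟩⟩ with hsd_def
    have key : ∀ y : ↥S,
        Nat.card {x : ↥S // Quotient.mk sd x = Quotient.mk sd y} = m / α := by
      intro y
      have horb := orbit_card m p α hm hp hαm hαp y.1 y.2
      refine Eq.trans ?_ horb
      have hFdef : ∀ x : {x : ↥S // Quotient.mk sd x = Quotient.mk sd y},
          (x.1 : ℤ → ℤ) ∈ {l' : ℤ → ℤ | ∃ k : ℤ, lambdaShift k y.1 = l'} := by
        intro x
        obtain ⟨k, hk⟩ := Quotient.exact x.2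
        exact ⟨-k, by rw [← hk, lShift_add, show -k + k = 0 by ring,
          lShift_zero (x.1 : ℤ → ℤ) (hzero x.1)]⟩
      set F : {x : ↥S // Quotient.mk sd x = Quotient.mk sd y} →
          ↥{l' : ℤ → ℤ | ∃ k : ℤ, lambdaShift k y.1 = l'} :=
        fun x => ⟨x.1.1, hFdef x⟩ with hF_def
      have hFinj : Function.Injective F := by
        intro a b hab
        simp only [hF_def, Subtype.mk.injEq] at hab
        exact Subtype.ext (Subtype.ext hab)
      have hFsurj : Function.Surjective F := by
        rintro ⟨l', k, hk⟩
        have hl'S : l' ∈ S := hk ▸ shift_mem_exact m p α k y.1 y.2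
        refine ⟨⟨⟨l', hl'S⟩, ?_⟩, rfl⟩
        apply Quotient.sound
        refine ⟨-k, ?_⟩
        show lambdaShift (-k) l' = (y : ℤ → ℤ)
        rw [← hk, lShift_add, show -k + k = 0 by ring, lShift_zero (y : ℤ → ℤ) (hzero y)]
      exact Nat.card_eq_of_bijective F ⟨hFinj, hFsurj⟩
    have hdecomp : Fintype.card ↥S =
        ∑ q : Quotient sd, Fintype.card {x : ↥S // Quotient.mk sd x = q} := by
      rw [← Fintype.card_sigma]
      exact (Fintype.card_congr (Equiv.sigmaFiberEquiv (Quotient.mk sd))).symm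
    have hsum : ∀ q : Quotient sd,
        Fintype.card {x : ↥S // Quotient.mk sd x = q} = m / α := by
      intro q
      refine Quotient.inductionOn q (fun y => ?_)
      rw [← Nat.card_eq_fintype_card]
      exact key y
    rw [Nat.card_eq_fintype_card, hdecomp, Finset.sum_congr rfl (fun q _ => hsum q),
      Finset.sum_const, smul_eq_mul]
    exact dvd_mul_left _ _
  · haveI : Infinite ↥(LambdaExact m p α) := Set.infinite_coe_iff.mpr hfin
    rw [Nat.card_eq_zero_of_infinite]
    exact dvd_zero _

/-- the cyclic group `C_m` acts on `Λ(m,p)` by shifting; the stabilizer of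
`λ ∈ Λ^(α)(m,p)` is the subgroup of order `α` (i.e. shifts by multiples of `m/α`),
the orbit of `λ` has `m/α` elements, and `m/α` divides `|Λ^(α)(m,p)|`. -/
theorem lambdaShift_stabilizer_orbit (m p α : ℕ) (hm : 0 < m) (hp : 0 < p)
    (hαm : α ∣ m) (hαp : α ∣ p) :
    (∀ (k : ℤ) (l : ℤ → ℤ), l ∈ Lambda m p → lambdaShift k l ∈ Lambda m p) ∧
    (∀ l ∈ LambdaExact m p α,
      (∀ k : ℤ, lambdaShift k l = l ↔ ((m / α : ℕ) : ℤ) ∣ k) ∧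
      Nat.card {l' : ℤ → ℤ | ∃ k : ℤ, lambdaShift k l = l'} = m / α) ∧
    (m / α) ∣ Nat.card (LambdaExact m p α) := by
  exact ⟨fun k l h => lShift_mem m p k l h,
    fun l hl => ⟨stab_iff m p α hm hp hαm hαp l hl, orbit_card m p α hm hp hαm hαp l hl⟩,
    card_dvd' m p α hm hp hαm hαp⟩
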